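/- Let β > 0, α ≥ 0 and let J be a symmetric random variable with |J| ≤ 1 a.s. If a symmetric real random variable g satisfies the distributional fixed-point equation g =_d Σ_{ℓ=1}^{ξ_{2α}} (1/β)·arctanh(tanh(βJ_ℓ)·tanh(βg_ℓ)), then E[g²] ≤ 2α. -/

import Mathlib

noncomputable section

open MeasureTheory ProbabilityTheory

/-- The inverse hyperbolic tangent. -/
def artanh (x : ℝ) : ℝ := (1 / 2) * Real.log ((1 + x) / (1 - x))

/-- Index type for the random variables entering the replica symmetric
fixed-point equation: the Poisson counter, the couplings and the effective fields. -/
inductive FPIdx : Type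
  | count : FPIdx
  | coupling (ℓ : ℕ) : FPIdx
  | field (ℓ : ℕ) : FPIdx

/-- Value type of each variable. -/
def FPIdxType : FPIdx → Type
  | .count => ℕ
  | .coupling _ => ℝ
  | .field _ => ℝ

/-- Measurable space structure on the value types. -/
def FPIdxMS : ∀ idx : FPIdx, MeasurableSpace (FPIdxType idx)
  | .count => inferInstanceAs (MeasurableSpace ℕ)
  | .coupling _ => inferInstanceAs (MeasurableSpace ℝ)
  | .field _ => inferInstanceAs (MeasurableSpace ℝ)

/-- The full family of variables, seen as one dependent family. -/
def fpFam {Ω : Type} (ξ : Ω → ℕ) (Jv gv : ℕ → Ω → ℝ) :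
    ∀ idx : FPIdx, Ω → FPIdxType idx
  | .count => ξ
  | .coupling ℓ => Jv ℓ
  | .field ℓ => gv ℓ


attribute [local instance] FPIdxMS

lemma measurable_tanh : Measurable Real.tanh := by
  have h : Real.tanh = fun x => Real.sinh x / Real.cosh x :=
    funext Real.tanh_eq_sinh_div_cosh
  rw [h]
  exact Real.continuous_sinh.measurable.div Real.continuous_cosh.measurable

lemma tanh_lt_one (x : ℝ) : Real.tanh x < 1 := by
  rw [Real.tanh_eq_sinh_div_cosh, div_lt_one (Real.cosh_pos x), ← sub_pos,
    Real.cosh_sub_sinh]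
  exact Real.exp_pos _

lemma neg_one_lt_tanh (x : ℝ) : -1 < Real.tanh x := by
  rw [Real.tanh_eq_sinh_div_cosh, lt_div_iff₀ (Real.cosh_pos x), ← sub_pos]
  have := Real.cosh_add_sinh x
  nlinarith [Real.exp_pos x]

lemma abs_tanh_lt_one (x : ℝ) : |Real.tanh x| < 1 :=
  abs_lt.2 ⟨neg_one_lt_tanh x, tanh_lt_one x⟩

lemma tanh_nonneg {x : ℝ} (hx : 0 ≤ x) : 0 ≤ Real.tanh x := by
  rw [Real.tanh_eq_sinh_div_cosh]
  exact div_nonneg (Real.sinh_nonneg_iff.2 hx) (Real.cosh_pos x).le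

lemma abs_tanh (x : ℝ) : |Real.tanh x| = Real.tanh |x| := by
  rcases le_or_gt 0 x with h | h
  · rw [abs_of_nonneg (tanh_nonneg h), abs_of_nonneg h]
  · have h1 : 0 ≤ Real.tanh (-x) := tanh_nonneg (by linarith)
    rw [Real.tanh_neg] at h1
    rw [abs_of_neg h, abs_of_nonpos (by linarith), Real.tanh_neg]

lemma artanh_neg (x : ℝ) : artanh (-x) = - artanh x := by
  unfold artanh
  rw [show (1 + -x) / (1 - -x) = ((1 + x) / (1 - x))⁻¹ by
    rw [inv_div]; ring_nf, Real.log_inv]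
  ring

lemma artanh_tanh (x : ℝ) : artanh (Real.tanh x) = x := by
  unfold artanh
  have hc := (Real.cosh_pos x).ne'
  have h1 : 1 + Real.tanh x = Real.exp x / Real.cosh x := by
    rw [Real.tanh_eq_sinh_div_cosh, ← Real.cosh_add_sinh]; field_simp
  have h2 : 1 - Real.tanh x = Real.exp (-x) / Real.cosh x := by
    rw [Real.tanh_eq_sinh_div_cosh, ← Real.cosh_sub_sinh]; field_simp
  have h3 : Real.exp x / Real.cosh x / (Real.exp (-x) / Real.cosh x)
      = Real.exp (x - -x) := by
    rw [Real.exp_sub]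
    field_simp
  rw [h1, h2, h3, Real.log_exp]
  ring

lemma artanh_nonneg {x : ℝ} (h0 : 0 ≤ x) (h1 : x < 1) : 0 ≤ artanh x := by
  unfold artanh
  have : (1:ℝ) ≤ (1 + x) / (1 - x) := by
    rw [le_div_iff₀ (by linarith)]; linarith
  nlinarith [Real.log_nonneg this]

lemma artanh_le_artanh {x y : ℝ} (h0 : 0 ≤ x) (hxy : x ≤ y) (hy : y < 1) :
    artanh x ≤ artanh y := by
  unfold artanh
  have hx1 : x < 1 := lt_of_le_of_lt hxy hy
  have h : (1 + x) / (1 - x) ≤ (1 + y) / (1 - y) := by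
    rw [div_le_div_iff₀ (by linarith) (by linarith)]; nlinarith
  have hpos : (0:ℝ) < (1 + x) / (1 - x) := div_pos (by linarith) (by linarith)
  nlinarith [Real.log_le_log hpos h]

lemma abs_artanh {x : ℝ} (h : |x| < 1) : |artanh x| = artanh |x| := by
  rcases le_or_gt 0 x with h0 | h0
  · rw [abs_of_nonneg h0, abs_of_nonneg (artanh_nonneg h0 (by rwa [abs_of_nonneg h0] at h))]
  · have h1 : 0 ≤ artanh (-x) :=
      artanh_nonneg (by linarith) (by rwa [abs_of_neg h0] at h)
    rw [artanh_neg] at h1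
    rw [abs_of_neg h0, abs_of_nonpos (by linarith), artanh_neg]

lemma abs_key {β : ℝ} (hβ : 0 < β) (j g : ℝ) :
    |β⁻¹ * artanh (Real.tanh (β * j) * Real.tanh (β * g))| ≤ |j| := by
  have hu := abs_tanh_lt_one (β * j)
  have habs : |Real.tanh (β*j) * Real.tanh (β*g)| ≤ |Real.tanh (β*j)| := by
    rw [abs_mul]
    exact mul_le_of_le_one_right (abs_nonneg _) (abs_tanh_lt_one _).le
  have h1 : |Real.tanh (β*j) * Real.tanh (β*g)| < 1 := lt_of_le_of_lt habs hu
  rw [abs_mul, abs_of_pos (inv_pos.2 hβ), abs_artanh h1]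
  have h2 : artanh |Real.tanh (β*j) * Real.tanh (β*g)| ≤ β * |j| := by
    calc artanh _ ≤ artanh |Real.tanh (β*j)| := artanh_le_artanh (abs_nonneg _) habs hu
      _ = β * |j| := by rw [abs_tanh, abs_mul, abs_of_pos hβ, artanh_tanh]
  calc β⁻¹ * artanh |Real.tanh (β*j) * Real.tanh (β*g)| ≤ β⁻¹ * (β * |j|) :=
        mul_le_mul_of_nonneg_left h2 (inv_pos.2 hβ).le
    _ = |j| := by field_simp

lemma measurable_artanh : Measurable artanh := by
  unfold artanh
  exact (Real.measurable_log.comp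
    ((measurable_const.add measurable_id).div (measurable_const.sub measurable_id))).const_mul _

lemma poisson_summable (l : ℝ) :
    Summable (fun k : ℕ => l ^ k / (Nat.factorial k) * (k : ℝ)) := by
  have hf : Summable (fun k : ℕ => l ^ k / (Nat.factorial k)) :=
    Real.summable_pow_div_factorial l
  have hg1 : ∀ k : ℕ, l ^ (k+1) / (Nat.factorial (k+1)) * (((k:ℕ)+1 : ℕ) : ℝ)
      = l * (l ^ k / (Nat.factorial k)) := by
    intro k
    have h1 : (Nat.factorial (k+1) : ℝ) = ((k:ℝ)+1) * Nat.factorial k := by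
      push_cast [Nat.factorial_succ]; ring
    have h2 : (Nat.factorial k : ℝ) ≠ 0 := Nat.cast_ne_zero.2 (Nat.factorial_ne_zero k)
    have h3 : ((k:ℝ)+1) ≠ 0 := by positivity
    push_cast
    field_simp [h1]
    rw [h1]; ring
  rw [← summable_nat_add_iff 1]
  exact (hf.mul_left l).congr (fun k => (hg1 k).symm)

lemma poisson_mean (l : ℝ) :
    (∑' k : ℕ, l ^ k / (Nat.factorial k) * (k : ℝ)) = l * Real.exp l := by
  have hf : Summable (fun k : ℕ => l ^ k / (Nat.factorial k)) :=
    Real.summable_pow_div_factorial l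
  have hexp : Real.exp l = ∑' k : ℕ, l ^ k / (Nat.factorial k) := by
    rw [Real.exp_eq_exp_ℝ, NormedSpace.exp_eq_tsum_div]
  have hg1 : ∀ k : ℕ, l ^ (k+1) / (Nat.factorial (k+1)) * (((k:ℕ)+1 : ℕ) : ℝ)
      = l * (l ^ k / (Nat.factorial k)) := by
    intro k
    have h1 : (Nat.factorial (k+1) : ℝ) = ((k:ℝ)+1) * Nat.factorial k := by
      push_cast [Nat.factorial_succ]; ring
    have h2 : (Nat.factorial k : ℝ) ≠ 0 := Nat.cast_ne_zero.2 (Nat.factorial_ne_zero k)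
    have h3 : ((k:ℝ)+1) ≠ 0 := by positivity
    push_cast
    field_simp [h1]
    rw [h1]; ring
  rw [(poisson_summable l).tsum_eq_zero_add]
  simp only [Nat.cast_zero, mul_zero, zero_add]
  rw [tsum_congr hg1, tsum_mul_left, ← hexp]

def evalCount {T : Finset FPIdx} (h : FPIdx.count ∈ T)
    (v : ∀ i : T, FPIdxType i) : ℕ := v ⟨FPIdx.count, h⟩

def evalCoupling (ℓ : ℕ) {T : Finset FPIdx} (h : FPIdx.coupling ℓ ∈ T)
    (v : ∀ i : T, FPIdxType i) : ℝ := v ⟨FPIdx.coupling ℓ, h⟩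

def evalField (ℓ : ℕ) {T : Finset FPIdx} (h : FPIdx.field ℓ ∈ T)
    (v : ∀ i : T, FPIdxType i) : ℝ := v ⟨FPIdx.field ℓ, h⟩

lemma measurable_evalCount {T : Finset FPIdx} (h : FPIdx.count ∈ T) :
    Measurable (evalCount h) := measurable_pi_apply _

lemma measurable_evalCoupling (ℓ : ℕ) {T : Finset FPIdx} (h : FPIdx.coupling ℓ ∈ T) :
    Measurable (evalCoupling ℓ h) := measurable_pi_apply _

lemma measurable_evalField (ℓ : ℕ) {T : Finset FPIdx} (h : FPIdx.field ℓ ∈ T) :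
    Measurable (evalField ℓ h) := measurable_pi_apply _


set_option maxHeartbeats 2000000 in
/-- **Second moment bound for replica symmetric fixed points.**
Let `β > 0`, `α ≥ 0`, let `ρJ` be the law of a symmetric coupling `J` with `|J| ≤ 1`
a.s.  If a symmetric law `ρg` satisfies the distributional fixed-point equation
`g =_d Σ_{ℓ<ξ_{2α}} (1/β) artanh(tanh(βJ_ℓ) tanh(βg_ℓ))`
(realized on some probability space with `ξ_{2α}` Poisson of mean `2α`,
`(J_ℓ)` i.i.d. with law `ρJ`, `(g_ℓ)` i.i.d. with law `ρg`, all mutually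
independent), then `E[g²] ≤ 2α`. -/
theorem replica_symmetric_fixed_point_second_moment
    (β α : ℝ) (hβ : 0 < β) (hα : 0 ≤ α)
    (ρJ ρg : Measure ℝ) [IsProbabilityMeasure ρJ] [IsProbabilityMeasure ρg]
    (hJsymm : Measure.map (fun x => -x) ρJ = ρJ)
    (hJbdd : ∀ᵐ x ∂ρJ, |x| ≤ 1)
    (hgsymm : Measure.map (fun x => -x) ρg = ρg)
    (Ω : Type) [MeasureSpace Ω] [IsProbabilityMeasure (ℙ : Measure Ω)]
    (ξ : Ω → ℕ) (Jv gv : ℕ → Ω → ℝ)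
    (measξ : Measurable ξ)
    (measJ : ∀ ℓ, Measurable (Jv ℓ))
    (measg : ∀ ℓ, Measurable (gv ℓ))
    (hξ : ∀ k : ℕ, (ℙ : Measure Ω) (ξ ⁻¹' {k})
      = ENNReal.ofReal (Real.exp (-(2 * α)) * (2 * α) ^ k / (Nat.factorial k)))
    (hJ : ∀ ℓ, Measure.map (Jv ℓ) (ℙ : Measure Ω) = ρJ)
    (hg : ∀ ℓ, Measure.map (gv ℓ) (ℙ : Measure Ω) = ρg)
    (hindep : iIndepFun (m := FPIdxMS) (fpFam ξ Jv gv) (ℙ : Measure Ω))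
    (hfix : Measure.map
        (fun ω => ∑ ℓ ∈ Finset.range (ξ ω),
          β⁻¹ * artanh (Real.tanh (β * Jv ℓ ω) * Real.tanh (β * gv ℓ ω)))
        (ℙ : Measure Ω) = ρg) :
    ∫⁻ x, ENNReal.ofReal (x ^ 2) ∂ρg ≤ ENNReal.ofReal (2 * α) := by
  classical
  set X : ℕ → Ω → ℝ := fun ℓ ω =>
    β⁻¹ * artanh (Real.tanh (β * Jv ℓ ω) * Real.tanh (β * gv ℓ ω)) with hXdef
  set F : ℝ × ℝ → ℝ := fun p =>
    β⁻¹ * artanh (Real.tanh (β * p.1) * Real.tanh (β * p.2)) with hFdef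
  clear_value X F
  have measF : Measurable F := by
    rw [hFdef]
    apply Measurable.const_mul
    apply measurable_artanh.comp
    exact ((measurable_tanh.comp (measurable_fst.const_mul β)).mul
      (measurable_tanh.comp (measurable_snd.const_mul β)))
  have measX : ∀ ℓ, Measurable (X ℓ) := by
    intro ℓ
    rw [hXdef]
    apply Measurable.const_mul
    apply measurable_artanh.comp
    exact (measurable_tanh.comp ((measJ ℓ).const_mul β)).mul
      (measurable_tanh.comp ((measg ℓ).const_mul β))
  have measfam : ∀ i, Measurable (fpFam ξ Jv gv i) := by
    intro i
    cases i with
    | count => exact measξ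
    | coupling ℓ => exact measJ ℓ
    | field ℓ => exact measg ℓ
  -- a.s. bound on X
  have hXbdd : ∀ ℓ, ∀ᵐ ω ∂(ℙ : Measure Ω), |X ℓ ω| ≤ 1 := by
    intro ℓ
    have hms : MeasurableSet {x : ℝ | |x| ≤ 1} :=
      (isClosed_le continuous_abs continuous_const).measurableSet
    have hJb : ∀ᵐ ω ∂(ℙ : Measure Ω), |Jv ℓ ω| ≤ 1 := by
      have h1 : ∀ᵐ x ∂(Measure.map (Jv ℓ) (ℙ : Measure Ω)), |x| ≤ 1 := by
        rw [hJ ℓ]; exact hJbdd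
      exact (ae_map_iff (measJ ℓ).aemeasurable hms).1 h1
    filter_upwards [hJb] with ω h
    simp only [hXdef]
    exact le_trans (abs_key hβ _ _) h
  have hXint : ∀ ℓ, Integrable (X ℓ) (ℙ : Measure Ω) := by
    intro ℓ
    refine Integrable.mono' (integrable_const 1) (measX ℓ).aestronglyMeasurable ?_
    filter_upwards [hXbdd ℓ] with ω h
    simpa [Real.norm_eq_abs] using h
  -- mean zero
  have hXmean : ∀ ℓ, ∫ ω, X ℓ ω ∂(ℙ : Measure Ω) = 0 := by
    intro ℓ
    have hIF : IndepFun (Jv ℓ) (gv ℓ) (ℙ : Measure Ω) :=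
      hindep.indepFun (by intro h; exact FPIdx.noConfusion h :
        FPIdx.coupling ℓ ≠ FPIdx.field ℓ)
    have hpair : Measure.map (fun ω => (Jv ℓ ω, gv ℓ ω)) (ℙ : Measure Ω) = ρJ.prod ρg := by
      rw [(indepFun_iff_map_prod_eq_prod_map_map (measJ ℓ).aemeasurable
        (measg ℓ).aemeasurable).1 hIF, hJ ℓ, hg ℓ]
    have h1 : ∫ ω, X ℓ ω ∂(ℙ : Measure Ω) = ∫ p, F p ∂(ρJ.prod ρg) := by
      rw [← hpair, integral_map ((measJ ℓ).prodMk (measg ℓ)).aemeasurable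
        measF.aestronglyMeasurable]
      simp only [hXdef, hFdef]
    have hprodsymm : Measure.map (Prod.map (fun x : ℝ => -x) (id : ℝ → ℝ)) (ρJ.prod ρg)
        = ρJ.prod ρg := by
      rw [← Measure.map_prod_map (f := fun x : ℝ => -x) (g := (id : ℝ → ℝ)) ρJ ρg
        measurable_neg measurable_id, hJsymm, Measure.map_id]
    have hFodd : ∀ p : ℝ × ℝ, F (Prod.map (fun x : ℝ => -x) (id : ℝ → ℝ) p) = - F p := by
      intro p
      simp only [hFdef, Prod.map, id_eq]
      rw [mul_neg, Real.tanh_neg, neg_mul, artanh_neg]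
      ring
    have h2 : ∫ p, F p ∂(ρJ.prod ρg) = - ∫ p, F p ∂(ρJ.prod ρg) := by
      conv_lhs => rw [← hprodsymm]
      rw [integral_map (Measurable.prodMap measurable_neg measurable_id).aemeasurable
        measF.aestronglyMeasurable]
      simp_rw [hFodd]
      exact integral_neg F
    rw [h1]
    linarith [h2]
  have hXX : ∀ ℓ m, ℓ ≠ m → IndepFun (X ℓ) (X m) (ℙ : Measure Ω) := by
    intro ℓ m hne
    have h4 := hindep.indepFun_prodMk_prodMk measfam
      (.coupling ℓ) (.field ℓ) (.coupling m) (.field m)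
      (by simp [hne]) (by simp) (by simp) (by simp [hne])
    have h5 := h4.comp (φ := F) (ψ := F) measF measF
    have e1 : F ∘ (fun a => (fpFam ξ Jv gv (FPIdx.coupling ℓ) a,
        fpFam ξ Jv gv (FPIdx.field ℓ) a)) = X ℓ := by
      funext a; simp only [hXdef, hFdef, Function.comp, fpFam]
    have e2 : F ∘ (fun a => (fpFam ξ Jv gv (FPIdx.coupling m) a,
        fpFam ξ Jv gv (FPIdx.field m) a)) = X m := by
      funext a; simp only [hXdef, hFdef, Function.comp, fpFam]
    rw [← e1, ← e2]
    exact h5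
  -- integrability of products
  have hSint : ∀ p q : ℕ, Integrable (fun ω => X p ω * X q ω) (ℙ : Measure Ω) := by
    intro p q
    refine Integrable.mono' (integrable_const 1)
      ((measX p).mul (measX q)).aestronglyMeasurable ?_
    filter_upwards [hXbdd p, hXbdd q] with ω h1 h2
    rw [Real.norm_eq_abs, abs_mul]
    calc |X p ω| * |X q ω| ≤ 1 * 1 := mul_le_mul h1 h2 (abs_nonneg _) zero_le_one
      _ = 1 := one_mul 1
  have hsq : ∀ (k : ℕ) (ω : Ω), (∑ ℓ ∈ Finset.range k, X ℓ ω) ^ 2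
      = ∑ p ∈ Finset.range k, ∑ q ∈ Finset.range k, X p ω * X q ω := by
    intro k ω
    rw [sq, Finset.sum_mul_sum]
  have hSkint : ∀ k : ℕ, Integrable (fun ω => (∑ ℓ ∈ Finset.range k, X ℓ ω) ^ 2)
      (ℙ : Measure Ω) := by
    intro k
    have h : (fun ω => (∑ ℓ ∈ Finset.range k, X ℓ ω) ^ 2)
        = fun ω => ∑ p ∈ Finset.range k, ∑ q ∈ Finset.range k, X p ω * X q ω := by
      funext ω; exact hsq k ω
    rw [h]
    exact integrable_finset_sum _ fun p _ =>
      integrable_finset_sum _ fun q _ => hSint p q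
  have hSk : ∀ k : ℕ, ∫ ω, (∑ ℓ ∈ Finset.range k, X ℓ ω) ^ 2 ∂(ℙ : Measure Ω) ≤ (k : ℝ) := by
    intro k
    have h : ∫ ω, (∑ ℓ ∈ Finset.range k, X ℓ ω) ^ 2 ∂(ℙ : Measure Ω)
        = ∑ p ∈ Finset.range k, ∑ q ∈ Finset.range k, ∫ ω, X p ω * X q ω ∂(ℙ : Measure Ω) := by
      simp_rw [hsq k]
      rw [integral_finset_sum _ fun p _ => integrable_finset_sum _ fun q _ => hSint p q]
      exact Finset.sum_congr rfl fun p _ => integral_finset_sum _ fun q _ => hSint p q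
    rw [h]
    have hbound : ∀ p ∈ Finset.range k,
        ∑ q ∈ Finset.range k, ∫ ω, X p ω * X q ω ∂(ℙ : Measure Ω) ≤ 1 := by
      intro p hp
      have hzero : ∀ q ∈ Finset.range k, q ≠ p →
          ∫ ω, X p ω * X q ω ∂(ℙ : Measure Ω) = 0 := by
        intro q _ hq
        have hind := (hXX p q (Ne.symm hq)).integral_mul_eq_mul_integral
          (measX p).aestronglyMeasurable (measX q).aestronglyMeasurable
        have : ∫ ω, X p ω * X q ω ∂(ℙ : Measure Ω)
            = (∫ ω, X p ω ∂(ℙ : Measure Ω)) * ∫ ω, X q ω ∂(ℙ : Measure Ω) := hind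
        rw [this, hXmean p, zero_mul]
      rw [Finset.sum_eq_single_of_mem p hp hzero]
      have hmono : ∫ ω, X p ω * X p ω ∂(ℙ : Measure Ω) ≤ ∫ _ω, (1:ℝ) ∂(ℙ : Measure Ω) := by
        apply integral_mono_ae (hSint p p) (integrable_const 1)
        filter_upwards [hXbdd p] with ω h1
        nlinarith [abs_nonneg (X p ω), abs_mul_abs_self (X p ω)]
      simpa using hmono
    calc ∑ p ∈ Finset.range k, ∑ q ∈ Finset.range k, ∫ ω, X p ω * X q ω ∂(ℙ : Measure Ω)
        ≤ ∑ p ∈ Finset.range k, (1:ℝ) := Finset.sum_le_sum hbound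
      _ = (k : ℝ) := by simp
  -- independence of ξ and partial sums
  have hindepxi : ∀ k : ℕ, IndepFun ξ (fun ω => ∑ ℓ ∈ Finset.range k, X ℓ ω)
      (ℙ : Measure Ω) := by
    intro k
    set T : Finset FPIdx :=
      (Finset.range k).image FPIdx.coupling ∪ (Finset.range k).image FPIdx.field with hT
    have hdisj : Disjoint ({FPIdx.count} : Finset FPIdx) T := by
      rw [Finset.disjoint_left]
      intro a ha hb
      rw [Finset.mem_singleton] at ha
      subst ha
      rw [hT, Finset.mem_union] at hb
      rcases hb with hb | hb <;>
        · rw [Finset.mem_image] at hb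
          obtain ⟨x, -, hx⟩ := hb
          exact FPIdx.noConfusion hx
    have hcmem : ∀ ℓ ∈ Finset.range k, FPIdx.coupling ℓ ∈ T := fun ℓ h =>
      Finset.mem_union_left _ (Finset.mem_image_of_mem _ h)
    have hfmem : ∀ ℓ ∈ Finset.range k, FPIdx.field ℓ ∈ T := fun ℓ h =>
      Finset.mem_union_right _ (Finset.mem_image_of_mem _ h)
    have hfin := hindep.indepFun_finset {FPIdx.count} T hdisj measfam
    set φL : (∀ i : ({FPIdx.count} : Finset FPIdx), FPIdxType i) → ℕ :=
      evalCount (Finset.mem_singleton_self _) with hφL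
    set φR : (∀ i : (T : Finset FPIdx), FPIdxType i) → ℝ :=
      fun v => ∑ ℓ ∈ (Finset.range k).attach,
        β⁻¹ * artanh (Real.tanh (β * evalCoupling ℓ.1 (hcmem ℓ.1 ℓ.2) v) *
          Real.tanh (β * evalField ℓ.1 (hfmem ℓ.1 ℓ.2) v)) with hφR
    have measφL : Measurable φL := measurable_evalCount _
    have measφR : Measurable φR := by
      rw [hφR]
      apply Finset.measurable_sum
      intro ℓ _
      apply Measurable.const_mul
      apply measurable_artanh.comp
      exact (measurable_tanh.comp ((measurable_evalCoupling _ _).const_mul β)).mul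
        (measurable_tanh.comp ((measurable_evalField _ _).const_mul β))
    have h5 := hfin.comp measφL measφR
    have e1 : φL ∘ (fun a (i : ({FPIdx.count} : Finset FPIdx)) => fpFam ξ Jv gv i a) = ξ := by
      funext a
      simp only [hφL, Function.comp, evalCount, fpFam]
    have e2 : φR ∘ (fun a (i : (T : Finset FPIdx)) => fpFam ξ Jv gv i a)
        = fun ω => ∑ ℓ ∈ Finset.range k, X ℓ ω := by
      funext a
      simp only [hφR, Function.comp, evalCoupling, evalField, fpFam, hXdef]
      exact Finset.sum_attach (Finset.range k)
        (fun ℓ => β⁻¹ * artanh (Real.tanh (β * Jv ℓ a) * Real.tanh (β * gv ℓ a)))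
    rw [e1, e2] at h5
    exact h5
  -- the sum variable
  set S : Ω → ℝ := fun ω => ∑ ℓ ∈ Finset.range (ξ ω), X ℓ ω with hSdef
  clear_value S
  have hfix' : Measure.map S (ℙ : Measure Ω) = ρg := by
    rw [hSdef]
    simp only [hXdef]
    exact hfix
  have measS : Measurable S := by
    rw [hSdef]
    have h1 : Measurable (fun p : Ω × ℕ => ∑ ℓ ∈ Finset.range p.2, X ℓ p.1) := by
      apply measurable_from_prod_countable_left
      intro n
      show Measurable fun x : Ω => ∑ ℓ ∈ Finset.range n, X ℓ x
      exact Finset.measurable_sum _ (fun ℓ _ => measX ℓ)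
    exact h1.comp (measurable_id.prodMk measξ)
  have measSq : Measurable (fun ω => ENNReal.ofReal (S ω ^ 2)) :=
    ENNReal.measurable_ofReal.comp (measS.pow_const 2)
  have key : ∫⁻ x, ENNReal.ofReal (x ^ 2) ∂ρg
      = ∫⁻ ω, ENNReal.ofReal (S ω ^ 2) ∂(ℙ : Measure Ω) := by
    have hm : Measurable fun x : ℝ => ENNReal.ofReal (x ^ 2) := by
      apply Measurable.ennreal_ofReal
      exact measurable_id.pow_const 2
    rw [← hfix', lintegral_map hm measS]
  -- partition over values of ξ
  have hA : ∀ k : ℕ, MeasurableSet (ξ ⁻¹' {k}) := fun k =>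
    measξ (measurableSet_singleton k)
  have hAdisj : Pairwise (Function.onFun Disjoint fun k => ξ ⁻¹' {k}) := by
    intro a b hab
    rw [Function.onFun, Set.disjoint_left]
    rintro ω h1 h2
    exact hab ((Set.mem_preimage.1 h1).symm.trans (Set.mem_preimage.1 h2))
  have hAunion : (⋃ k, ξ ⁻¹' {k}) = Set.univ := by
    ext ω
    simp
  have hsplit : ∫⁻ ω, ENNReal.ofReal (S ω ^ 2) ∂(ℙ : Measure Ω)
      = ∑' k : ℕ, ∫⁻ ω in ξ ⁻¹' {k}, ENNReal.ofReal (S ω ^ 2) ∂(ℙ : Measure Ω) := by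
    rw [← lintegral_iUnion hA hAdisj, hAunion, setLIntegral_univ]
  -- bound each term
  have hterm : ∀ k : ℕ, ∫⁻ ω in ξ ⁻¹' {k}, ENNReal.ofReal (S ω ^ 2) ∂(ℙ : Measure Ω)
      ≤ ENNReal.ofReal ((2*α) ^ k / (Nat.factorial k) * (k:ℝ) * Real.exp (-(2*α))) := by
    intro k
    have hcong : ∫⁻ ω in ξ ⁻¹' {k}, ENNReal.ofReal (S ω ^ 2) ∂(ℙ : Measure Ω)
        = ∫⁻ ω in ξ ⁻¹' {k},
          ENNReal.ofReal ((∑ ℓ ∈ Finset.range k, X ℓ ω) ^ 2) ∂(ℙ : Measure Ω) := by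
      apply setLIntegral_congr_fun (hA k)
      intro ω hω
      have hk : ξ ω = k := hω
      rw [hSdef]
      simp only [hk]
    rw [hcong]
    have hind := (hindepxi k).comp
      (φ := fun n : ℕ => Set.indicator ({k} : Set ℕ) (fun _ => (1:ENNReal)) n)
      (ψ := fun x : ℝ => ENNReal.ofReal (x ^ 2))
      (measurable_one.indicator (measurableSet_singleton k))
      (ENNReal.measurable_ofReal.comp (measurable_id.pow_const 2))
    have heq1 : ∀ ω, (ξ ⁻¹' {k}).indicator
        (fun ω => ENNReal.ofReal ((∑ ℓ ∈ Finset.range k, X ℓ ω) ^ 2)) ω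
        = Set.indicator ({k} : Set ℕ) (fun _ => (1:ENNReal)) (ξ ω)
          * ENNReal.ofReal ((∑ ℓ ∈ Finset.range k, X ℓ ω) ^ 2) := by
      intro ω
      by_cases hω : ξ ω = k
      · rw [Set.indicator_of_mem (by exact hω), Set.indicator_of_mem (by exact hω), one_mul]
      · rw [Set.indicator_of_notMem (by exact hω), Set.indicator_of_notMem (by exact hω),
          zero_mul]
    have hind' : IndepFun
        (fun ω => Set.indicator ({k} : Set ℕ) (fun _ => (1:ENNReal)) (ξ ω))
        (fun ω => ENNReal.ofReal ((∑ ℓ ∈ Finset.range k, X ℓ ω) ^ 2))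
        (ℙ : Measure Ω) := hind
    have hm1 : Measurable fun ω => Set.indicator ({k} : Set ℕ) (fun _ => (1:ENNReal)) (ξ ω) :=
      (measurable_one.indicator (measurableSet_singleton k)).comp measξ
    have hm2 : Measurable fun ω => ENNReal.ofReal ((∑ ℓ ∈ Finset.range k, X ℓ ω) ^ 2) :=
      ENNReal.measurable_ofReal.comp
        ((Finset.measurable_sum _ (fun ℓ _ => measX ℓ)).pow_const 2)
    rw [← lintegral_indicator (hA k), lintegral_congr heq1,
      lintegral_mul_eq_lintegral_mul_lintegral_of_indepFun'' hm1.aemeasurable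
        hm2.aemeasurable hind']
    have hPf : ∫⁻ ω, Set.indicator ({k} : Set ℕ) (fun _ => (1:ENNReal)) (ξ ω) ∂(ℙ : Measure Ω)
        = ENNReal.ofReal (Real.exp (-(2 * α)) * (2 * α) ^ k / (Nat.factorial k)) := by
      have h2 : (fun ω => Set.indicator ({k} : Set ℕ) (fun _ => (1:ENNReal)) (ξ ω))
          = (ξ ⁻¹' {k}).indicator (1 : Ω → ENNReal) := by
        funext ω
        by_cases hω : ξ ω = k <;> simp [Set.indicator, hω]
      rw [h2, lintegral_indicator_one (hA k), hξ k]
    have hgb : ∫⁻ ω, ENNReal.ofReal ((∑ ℓ ∈ Finset.range k, X ℓ ω) ^ 2) ∂(ℙ : Measure Ω)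
        ≤ ENNReal.ofReal (k : ℝ) := by
      rw [← ofReal_integral_eq_lintegral_ofReal (hSkint k)
        (ae_of_all _ fun ω => sq_nonneg _)]
      exact ENNReal.ofReal_le_ofReal (hSk k)
    rw [hPf]
    calc ENNReal.ofReal (Real.exp (-(2 * α)) * (2 * α) ^ k / (Nat.factorial k))
          * ∫⁻ ω, ENNReal.ofReal ((∑ ℓ ∈ Finset.range k, X ℓ ω) ^ 2) ∂(ℙ : Measure Ω)
        ≤ ENNReal.ofReal (Real.exp (-(2 * α)) * (2 * α) ^ k / (Nat.factorial k))
          * ENNReal.ofReal (k : ℝ) := by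
          exact mul_le_mul_right hgb _
      _ = ENNReal.ofReal ((2*α) ^ k / (Nat.factorial k) * (k:ℝ) * Real.exp (-(2*α))) := by
          rw [← ENNReal.ofReal_mul (by positivity)]
          congr 1
          ring
  -- sum up
  have hsummable : Summable (fun k : ℕ =>
      (2*α) ^ k / (Nat.factorial k) * (k:ℝ) * Real.exp (-(2*α))) :=
    (poisson_summable (2*α)).mul_right _
  have htsum : (∑' k : ℕ, (2*α) ^ k / (Nat.factorial k) * (k:ℝ) * Real.exp (-(2*α)))
      = 2 * α := by
    rw [tsum_mul_right, poisson_mean]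
    have h2 : Real.exp (2*α) * Real.exp (-(2*α)) = 1 := by
      rw [← Real.exp_add]; simp
    linear_combination (2*α) * h2
  calc ∫⁻ x, ENNReal.ofReal (x ^ 2) ∂ρg
      = ∑' k : ℕ, ∫⁻ ω in ξ ⁻¹' {k}, ENNReal.ofReal (S ω ^ 2) ∂(ℙ : Measure Ω) := by
        rw [key, hsplit]
    _ ≤ ∑' k : ℕ, ENNReal.ofReal ((2*α) ^ k / (Nat.factorial k) * (k:ℝ)
          * Real.exp (-(2*α))) := ENNReal.tsum_le_tsum hterm
    _ = ENNReal.ofReal (∑' k : ℕ, (2*α) ^ k / (Nat.factorial k) * (k:ℝ)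
          * Real.exp (-(2*α))) := by
        rw [ENNReal.ofReal_tsum_of_nonneg (fun k => by positivity) hsummable]
    _ = ENNReal.ofReal (2 * α) := by rw [htsum]


end
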